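/- arXiv:2209.05986 — 4 statements merged into one kernel-verified Lean document; each statement's English description precedes it below -/
import Mathlib

section
/- Let ψ₁ be the word length on ℤⁿ and ⟨·,·⟩_{ψ₁} its Gromov form on ℝ[ℤⁿ]. For j ∈ [n] and ℓ ∈ ℤ∖{0}, set u_j(ℓ) = δ_{ℓ e_j} − δ_{(ℓ − sgn(ℓ)) e_j}. Then ⟨u_j(ℓ), u_{j'}(ℓ')⟩_{ψ₁} = 1 if (j,ℓ) = (j',ℓ') and 0 otherwise; i.e. the family {u_j(ℓ)} is orthonormal with respect to the Gromov form. -/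
/-- The Gromov form of the word length ψ₁ on ℤⁿ, on basis vectors. -/
noncomputable def gromovZn (n : ℕ) (g h : Fin n → ℤ) : ℝ :=
  (((∑ j, |g j|) + (∑ j, |h j|) - (∑ j, |(h - g) j|) : ℤ) : ℝ) / 2

/-- Bilinear extension of the Gromov form to ℝ[ℤⁿ]. -/
noncomputable def gromovFormZn (n : ℕ) (a b : (Fin n → ℤ) →₀ ℝ) : ℝ :=
  ∑ g ∈ a.support, ∑ h ∈ b.support, a g * b h * gromovZn n g h

/-- u_j(ℓ) = δ_{ℓe_j} − δ_{(ℓ−sgn ℓ)e_j} ∈ ℝ[ℤⁿ]. -/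
noncomputable def uZn (n : ℕ) (j : Fin n) (ℓ : ℤ) : (Fin n → ℤ) →₀ ℝ :=
  Finsupp.single (Pi.single j ℓ) 1 - Finsupp.single (Pi.single j (ℓ - ℓ.sign)) 1

lemma sum_abs_single (n : ℕ) (j : Fin n) (x : ℤ) : ∑ i, |Pi.single j x i| = |x| := by
  have : ∀ i, |(Pi.single j x : Fin n → ℤ) i| = (Pi.single j |x| : Fin n → ℤ) i := by
    intro i
    rcases eq_or_ne i j with rfl | h
    · simp
    · simp [Pi.single_eq_of_ne h]
  simp_rw [this]
  simpa using Finset.sum_pi_single' j |x| Finset.univ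

lemma gromov_single_same (n : ℕ) (j : Fin n) (x y : ℤ) :
    gromovZn n (Pi.single j x) (Pi.single j y) = ((|x| + |y| - |y - x| : ℤ) : ℝ) / 2 := by
  have : (Pi.single j y - Pi.single j x : Fin n → ℤ) = Pi.single j (y - x) := by
    simp [Pi.single_sub]
  rw [gromovZn, this]
  rw [sum_abs_single, sum_abs_single, sum_abs_single]

lemma gromov_single_ne (n : ℕ) {j j' : Fin n} (h : j ≠ j') (x y : ℤ) :
    gromovZn n (Pi.single j x) (Pi.single j' y) = 0 := by
  have key : ∀ i, |(Pi.single j' y - Pi.single j x : Fin n → ℤ) i|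
      = |(Pi.single j' y : Fin n → ℤ) i| + |(Pi.single j x : Fin n → ℤ) i| := by
    intro i
    rcases eq_or_ne i j with rfl | hij
    · have h0 : (Pi.single j' y : Fin n → ℤ) i = 0 := by rw [Pi.single_eq_of_ne h]
      simp [h0]
    rcases eq_or_ne i j' with rfl | hij'
    · simp [Pi.single_eq_of_ne hij]
    · simp [Pi.single_eq_of_ne hij, Pi.single_eq_of_ne hij']
  rw [gromovZn]
  have : ∑ i, |(Pi.single j' y - Pi.single j x : Fin n → ℤ) i|
      = (∑ i, |(Pi.single j' y : Fin n → ℤ) i|) + ∑ i, |(Pi.single j x : Fin n → ℤ) i| := by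
    rw [← Finset.sum_add_distrib]; exact Finset.sum_congr rfl fun i _ => key i
  rw [this]
  push_cast
  ring

lemma form_expand (n : ℕ) (g g' h h' : Fin n → ℤ) (hg : g ≠ g') (hh : h ≠ h') :
    gromovFormZn n (Finsupp.single g 1 - Finsupp.single g' 1)
      (Finsupp.single h 1 - Finsupp.single h' 1)
    = gromovZn n g h - gromovZn n g h' - gromovZn n g' h + gromovZn n g' h' := by
  have eg : (Finsupp.single g 1 - Finsupp.single g' 1 : (Fin n → ℤ) →₀ ℝ)
      = Finsupp.single g 1 + Finsupp.single g' (-1) := by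
    rw [sub_eq_add_neg, Finsupp.single_neg]
  have eh : (Finsupp.single h 1 - Finsupp.single h' 1 : (Fin n → ℤ) →₀ ℝ)
      = Finsupp.single h 1 + Finsupp.single h' (-1) := by
    rw [sub_eq_add_neg, Finsupp.single_neg]
  have sg : (Finsupp.single g 1 + Finsupp.single g' (-1) : (Fin n → ℤ) →₀ ℝ).support
      = {g, g'} := by
    rw [Finsupp.support_add_eq]
    · rw [Finsupp.support_single_ne_zero _ one_ne_zero,
        Finsupp.support_single_ne_zero _ (by norm_num : (-1:ℝ) ≠ 0)]
      ext x; simp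
    · rw [Finsupp.support_single_ne_zero _ one_ne_zero,
        Finsupp.support_single_ne_zero _ (by norm_num : (-1:ℝ) ≠ 0)]
      rw [Finset.disjoint_singleton]; exact hg
  have sh : (Finsupp.single h 1 + Finsupp.single h' (-1) : (Fin n → ℤ) →₀ ℝ).support
      = {h, h'} := by
    rw [Finsupp.support_add_eq]
    · rw [Finsupp.support_single_ne_zero _ one_ne_zero,
        Finsupp.support_single_ne_zero _ (by norm_num : (-1:ℝ) ≠ 0)]
      ext x; simp
    · rw [Finsupp.support_single_ne_zero _ one_ne_zero,
        Finsupp.support_single_ne_zero _ (by norm_num : (-1:ℝ) ≠ 0)]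
      rw [Finset.disjoint_singleton]; exact hh
  rw [gromovFormZn, eg, eh, sg, sh]
  rw [Finset.sum_pair hg]
  rw [Finset.sum_pair hh, Finset.sum_pair hh]
  simp [Finsupp.single_apply, hg, hg.symm, hh, hh.symm]
  ring

lemma key_int (ℓ ℓ' : ℤ) (h : ℓ ≠ 0) (h' : ℓ' ≠ 0) :
    (|ℓ| + |ℓ'| - |ℓ' - ℓ|) - (|ℓ| + |ℓ' - ℓ'.sign| - |ℓ' - ℓ'.sign - ℓ|)
    - (|ℓ - ℓ.sign| + |ℓ'| - |ℓ' - (ℓ - ℓ.sign)|)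
    + (|ℓ - ℓ.sign| + |ℓ' - ℓ'.sign| - |ℓ' - ℓ'.sign - (ℓ - ℓ.sign)|)
    = if ℓ = ℓ' then 2 else 0 := by
  rcases h.lt_or_gt with h1 | h1 <;> rcases h'.lt_or_gt with h2 | h2 <;>
    simp [Int.sign_eq_one_of_pos, Int.sign_eq_neg_one_of_neg, h1, h2] <;>
    by_cases he : ℓ = ℓ' <;> simp [he, abs] <;> omega

/-- the family {u_j(ℓ) : j ∈ [n], ℓ ∈ ℤ∖{0}} is orthonormal for the
Gromov form of the word length on ℤⁿ. -/
theorem uZn_orthonormal (n : ℕ) (j j' : Fin n) (ℓ ℓ' : ℤ) (hℓ : ℓ ≠ 0) (hℓ' : ℓ' ≠ 0) :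
    gromovFormZn n (uZn n j ℓ) (uZn n j' ℓ') = if j = j' ∧ ℓ = ℓ' then 1 else 0 := by
  have hs : ℓ.sign ≠ 0 := by simpa using hℓ
  have hs' : ℓ'.sign ≠ 0 := by simpa using hℓ'
  have hg : (Pi.single j ℓ : Fin n → ℤ) ≠ Pi.single j (ℓ - ℓ.sign) := by
    intro hcontra
    have := congrFun hcontra j
    simp at this
    omega
  have hh : (Pi.single j' ℓ' : Fin n → ℤ) ≠ Pi.single j' (ℓ' - ℓ'.sign) := by
    intro hcontra
    have := congrFun hcontra j'
    simp at this
    omega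
  rw [uZn, uZn, form_expand n _ _ _ _ hg hh]
  rcases eq_or_ne j j' with rfl | hjj
  · rw [gromov_single_same, gromov_single_same, gromov_single_same, gromov_single_same]
    have key := key_int ℓ ℓ' hℓ hℓ'
    have step : ((|ℓ| + |ℓ'| - |ℓ' - ℓ| : ℤ) : ℝ) / 2
        - ((|ℓ| + |ℓ' - ℓ'.sign| - |ℓ' - ℓ'.sign - ℓ| : ℤ) : ℝ) / 2
        - ((|ℓ - ℓ.sign| + |ℓ'| - |ℓ' - (ℓ - ℓ.sign)| : ℤ) : ℝ) / 2
        + ((|ℓ - ℓ.sign| + |ℓ' - ℓ'.sign| - |ℓ' - ℓ'.sign - (ℓ - ℓ.sign)| : ℤ) : ℝ) / 2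
        = (((if ℓ = ℓ' then 2 else 0 : ℤ)) : ℝ) / 2 := by
      rw [← key]; push_cast; ring
    rw [step]
    by_cases he : ℓ = ℓ' <;> simp [he]
  · rw [gromov_single_ne n hjj, gromov_single_ne n hjj, gromov_single_ne n hjj,
      gromov_single_ne n hjj]
    simp [hjj]
end

section
/- Let ψ₁ be the word length on ℤⁿ with Gromov form ⟨·,·⟩_{ψ₁}. For g ∈ ℤⁿ with g_j ≠ 0, let g_{[j]}⁻ = g − sgn(g_j) e_j and w_{g,j} = δ_g − δ_{g_{[j]}⁻}. Then ⟨w_{g,j} − u_j(g_j), w_{g,j} − u_j(g_j)⟩_{ψ₁} = 0, where u_j(ℓ) = δ_{ℓe_j} − δ_{(ℓ−sgn(ℓ))e_j}; i.e. w_{g,j} equals u_j(g_j) modulo the kernel of the Gromov form. -/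
/-- w_{g,j} = δ_g − δ_{g_{[j]}⁻} where g_{[j]}⁻ = g − sgn(g_j) e_j. -/
noncomputable def wZn (n : ℕ) (g : Fin n → ℤ) (j : Fin n) : (Fin n → ℤ) →₀ ℝ :=
  Finsupp.single g 1 - Finsupp.single (g - Pi.single j (g j).sign) 1

lemma form_superset (n : ℕ) (a : (Fin n → ℤ) →₀ ℝ) (s : Finset (Fin n → ℤ))
    (h : a.support ⊆ s) :
    gromovFormZn n a a = ∑ g ∈ s, ∑ h ∈ s, a g * a h * gromovZn n g h := by
  unfold gromovFormZn
  rw [Finset.sum_subset h (by intro x _ hx; simp [Finsupp.notMem_support_iff.mp hx])]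
  refine Finset.sum_congr rfl fun g _ => ?_
  exact Finset.sum_subset h (by intro x _ hx; simp [Finsupp.notMem_support_iff.mp hx])

lemma abs_sub_sign (ℓ : ℤ) (h : ℓ ≠ 0) : |ℓ - ℓ.sign| = |ℓ| - 1 := by
  rcases lt_trichotomy ℓ 0 with h'|h'|h'
  · simp only [Int.sign_eq_neg_one_of_neg h']
    rw [abs_of_neg h', abs_of_nonpos (by omega)]; ring
  · omega
  · simp only [Int.sign_eq_one_of_pos h']
    rw [abs_of_pos h', abs_of_nonneg (by omega)]

lemma abs_sign (ℓ : ℤ) (h : ℓ ≠ 0) : |ℓ.sign| = 1 := by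
  rcases lt_trichotomy ℓ 0 with h'|h'|h'
  · simp [Int.sign_eq_neg_one_of_neg h']
  · omega
  · simp [Int.sign_eq_one_of_pos h']

/-- w_{g,j} = u_j(g_j) modulo the kernel of the Gromov form:
the difference has zero Gromov norm. -/
theorem wZn_eq_uZn_mod_kernel (n : ℕ) (g : Fin n → ℤ) (j : Fin n) (hg : g j ≠ 0) :
    gromovFormZn n (wZn n g j - uZn n j (g j)) (wZn n g j - uZn n j (g j)) = 0 := by
  by_cases hd : g = Pi.single j (g j)
  · -- degenerate case: w = u
    have h2 : g - Pi.single j ((g j).sign) = Pi.single j (g j - (g j).sign) := by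
      rw [Pi.single_sub, ← hd]
    have hw : wZn n g j = uZn n j (g j) := by
      unfold wZn uZn
      rw [h2]
      nth_rewrite 1 [hd]
      rfl
    rw [hw, sub_self]
    simp [gromovFormZn]
  · -- nondegenerate case
    set sg := (g j).sign with hsgdef
    have hsg : sg ≠ 0 := fun h => hg (Int.sign_eq_zero_iff_zero.mp h)
    have hsg1 : |sg| = 1 := abs_sign _ hg
    have habs : |g j - sg| = |g j| - 1 := abs_sub_sign _ hg
    set q2 : Fin n → ℤ := g - Pi.single j sg with hq2
    set q3 : Fin n → ℤ := Pi.single j (g j) with hq3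
    set q4 : Fin n → ℤ := Pi.single j (g j - sg) with hq4
    have hq2j : q2 j = g j - sg := by simp [hq2]
    have hq3j : q3 j = g j := by simp [hq3]
    have hq4j : q4 j = g j - sg := by simp [hq4]
    have hq2k : ∀ k, k ≠ j → q2 k = g k := by
      intro k hk; simp [hq2, Pi.single_eq_of_ne hk]
    have hq3k : ∀ k, k ≠ j → q3 k = 0 := by
      intro k hk; simp [hq3, Pi.single_eq_of_ne hk]
    have hq4k : ∀ k, k ≠ j → q4 k = 0 := by
      intro k hk; simp [hq4, Pi.single_eq_of_ne hk]
    -- distinctness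
    have h12 : g ≠ q2 := by
      intro h; have := congrFun h j; rw [hq2j] at this; omega
    have h13 : g ≠ q3 := hd
    have h14 : g ≠ q4 := by
      intro h; have := congrFun h j; rw [hq4j] at this; omega
    have h23 : q2 ≠ q3 := by
      intro h; have := congrFun h j; rw [hq2j, hq3j] at this; omega
    have h24 : q2 ≠ q4 := by
      intro h
      apply hd
      funext k
      by_cases hk : k = j
      · subst hk; simp [hq3]
      · have := congrFun h k
        rw [hq2k k hk, hq4k k hk] at this
        rw [hq3k k hk, this]
    have h34 : q3 ≠ q4 := by
      intro h; have := congrFun h j; rw [hq3j, hq4j] at this; omega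
    -- the vector
    have hv : wZn n g j - uZn n j (g j) =
        (Finsupp.single g 1 - Finsupp.single q2 1) -
          (Finsupp.single q3 1 - Finsupp.single q4 1) := rfl
    set v := wZn n g j - uZn n j (g j) with hvdef
    set S : Finset (Fin n → ℤ) := insert g (insert q2 (insert q3 {q4})) with hS
    have hsupp : v.support ⊆ S := by
      intro x hx
      simp only [hS, Finset.mem_insert, Finset.mem_singleton]
      by_contra hc
      push_neg at hc
      obtain ⟨h1, h2, h3, h4⟩ := hc
      apply Finsupp.mem_support_iff.mp hx
      rw [hv]
      simp [Finsupp.single_eq_of_ne' (Ne.symm h1), Finsupp.single_eq_of_ne' (Ne.symm h2),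
        Finsupp.single_eq_of_ne' (Ne.symm h3), Finsupp.single_eq_of_ne' (Ne.symm h4)]
    have hs : ∀ f : (Fin n → ℤ) → ℝ, ∑ x ∈ S, f x = f g + f q2 + f q3 + f q4 := by
      intro f
      rw [hS, Finset.sum_insert (by simp [h12, h13, h14]),
        Finset.sum_insert (by simp [h23, h24]),
        Finset.sum_insert (by simp [h34]), Finset.sum_singleton]
      ring
    -- coefficient evaluations
    have hv1 : v g = 1 := by
      rw [hv]
      simp [Finsupp.single_eq_of_ne' (Ne.symm h12), Finsupp.single_eq_of_ne' (Ne.symm h13),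
        Finsupp.single_eq_of_ne' (Ne.symm h14)]
    have hv2 : v q2 = -1 := by
      rw [hv]
      simp [Finsupp.single_eq_of_ne' h12, Finsupp.single_eq_of_ne' (Ne.symm h23),
        Finsupp.single_eq_of_ne' (Ne.symm h24)]
    have hv3 : v q3 = -1 := by
      rw [hv]
      simp [Finsupp.single_eq_of_ne' h13, Finsupp.single_eq_of_ne' h23,
        Finsupp.single_eq_of_ne' (Ne.symm h34)]
    have hv4 : v q4 = 1 := by
      rw [hv]
      simp [Finsupp.single_eq_of_ne' h14, Finsupp.single_eq_of_ne' h24,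
        Finsupp.single_eq_of_ne' h34]
    -- sum helpers
    set T : ℤ := ∑ k ∈ Finset.univ.erase j, |g k| with hT
    have off : ∀ w : Fin n → ℤ, (∀ k, k ≠ j → |w k| = |g k|) →
        (∑ k, |w k|) = |w j| + T := by
      intro w hw
      rw [← Finset.add_sum_erase _ _ (Finset.mem_univ j)]
      congr 1
      exact Finset.sum_congr rfl fun k hk => hw k (Finset.mem_erase.mp hk).1
    have off0 : ∀ w : Fin n → ℤ, (∀ k, k ≠ j → w k = 0) →
        (∑ k, |w k|) = |w j| := by
      intro w hw
      rw [← Finset.add_sum_erase _ _ (Finset.mem_univ j)]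
      rw [Finset.sum_eq_zero fun k hk => by rw [hw k (Finset.mem_erase.mp hk).1, abs_zero]]
      ring
    -- point norms
    have e1 : (∑ k, |g k|) = |g j| + T := off g fun k _ => rfl
    have e2 : (∑ k, |q2 k|) = (|g j| - 1) + T := by
      rw [off q2 fun k hk => by rw [hq2k k hk], hq2j, habs]
    have e3 : (∑ k, |q3 k|) = |g j| := by
      rw [off0 q3 hq3k, hq3j]
    have e4 : (∑ k, |q4 k|) = |g j| - 1 := by
      rw [off0 q4 hq4k, hq4j, habs]
    -- difference norms
    have d0 : ∀ a : Fin n → ℤ, (∑ k, |(a - a) k|) = 0 := by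
      intro a; simp
    have d12 : (∑ k, |(q2 - g) k|) = 1 := by
      rw [off0 _ fun k hk => by simp [hq2k k hk]]
      simp [hq2j, hsg1]
    have d21 : (∑ k, |(g - q2) k|) = 1 := by
      rw [off0 _ fun k hk => by simp [hq2k k hk]]
      simp [hq2j, hsg1]
    have d13 : (∑ k, |(q3 - g) k|) = T := by
      rw [off _ fun k hk => by simp [hq3k k hk]]
      simp [hq3j]
    have d31 : (∑ k, |(g - q3) k|) = T := by
      rw [off _ fun k hk => by simp [hq3k k hk]]
      simp [hq3j]
    have d14 : (∑ k, |(q4 - g) k|) = 1 + T := by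
      rw [off _ fun k hk => by simp [hq4k k hk]]
      have : (q4 - g) j = -sg := by rw [Pi.sub_apply, hq4j]; ring
      rw [this, abs_neg, hsg1]
    have d41 : (∑ k, |(g - q4) k|) = 1 + T := by
      rw [off _ fun k hk => by simp [hq4k k hk]]
      have : (g - q4) j = sg := by rw [Pi.sub_apply, hq4j]; ring
      rw [this, hsg1]
    have d23 : (∑ k, |(q3 - q2) k|) = 1 + T := by
      rw [off _ fun k hk => by simp [hq3k k hk, hq2k k hk]]
      have : (q3 - q2) j = sg := by rw [Pi.sub_apply, hq3j, hq2j]; ring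
      rw [this, hsg1]
    have d32 : (∑ k, |(q2 - q3) k|) = 1 + T := by
      rw [off _ fun k hk => by simp [hq3k k hk, hq2k k hk]]
      have : (q2 - q3) j = -sg := by rw [Pi.sub_apply, hq3j, hq2j]; ring
      rw [this, abs_neg, hsg1]
    have d24 : (∑ k, |(q4 - q2) k|) = T := by
      rw [off _ fun k hk => by simp [hq4k k hk, hq2k k hk]]
      have : (q4 - q2) j = 0 := by rw [Pi.sub_apply, hq4j, hq2j]; ring
      rw [this, abs_zero]; ring
    have d42 : (∑ k, |(q2 - q4) k|) = T := by
      rw [off _ fun k hk => by simp [hq4k k hk, hq2k k hk]]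
      have : (q2 - q4) j = 0 := by rw [Pi.sub_apply, hq4j, hq2j]; ring
      rw [this, abs_zero]; ring
    have d34 : (∑ k, |(q4 - q3) k|) = 1 := by
      rw [off0 _ fun k hk => by simp [hq4k k hk, hq3k k hk]]
      have : (q4 - q3) j = -sg := by rw [Pi.sub_apply, hq4j, hq3j]; ring
      rw [this, abs_neg, hsg1]
    have d43 : (∑ k, |(q3 - q4) k|) = 1 := by
      rw [off0 _ fun k hk => by simp [hq4k k hk, hq3k k hk]]
      have : (q3 - q4) j = sg := by rw [Pi.sub_apply, hq4j, hq3j]; ring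
      rw [this, hsg1]
    rw [form_superset n v S hsupp]
    rw [hs]
    simp only [hs]
    simp only [hv1, hv2, hv3, hv4]
    simp only [gromovZn]
    rw [e1, e2, e3, e4, d0, d0 q2, d0 q3, d0 q4, d12, d21, d13, d31, d14, d41,
      d23, d32, d24, d42, d34, d43]
    push_cast
    ring
end

section
/- On ℤ_{2m} the word length |g| = min{g, 2m−g} (for representatives 0 ≤ g < 2m) is conditionally negative: for every finitely supported complex family (a_g)_{g∈ℤ_{2m}} with ∑ a_g = 0 one has ∑_{g,h} conj(a_g) a_h |h−g| ≤ 0. -/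
open scoped ComplexOrder

private lemma countA (m t : ℕ) (hm : 0 < m) (ht : t < 2*m) :
    ((Finset.range m).filter (fun j => m ≤ (t + j) % (2*m))).card = min t (2*m - t) := by
  rcases le_or_gt t m with h | h
  · have he : (Finset.range m).filter (fun j => m ≤ (t + j) % (2*m)) = Finset.Ico (m - t) m := by
      ext j
      simp only [Finset.mem_filter, Finset.mem_range, Finset.mem_Ico]
      constructor
      · rintro ⟨hj, hmod⟩
        rw [Nat.mod_eq_of_lt (by omega)] at hmod
        omega
      · rintro ⟨h1, h2⟩
        refine ⟨h2, ?_⟩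
        rw [Nat.mod_eq_of_lt (by omega)]
        omega
    rw [he, Nat.card_Ico]
    omega
  · have he : (Finset.range m).filter (fun j => m ≤ (t + j) % (2*m)) = Finset.range (2*m - t) := by
      ext j
      simp only [Finset.mem_filter, Finset.mem_range]
      constructor
      · rintro ⟨hj, hmod⟩
        by_contra hc
        push_neg at hc
        have : (t + j) % (2*m) = t + j - 2*m := by
          rw [Nat.mod_eq_sub_mod (by omega), Nat.mod_eq_of_lt (by omega)]
        omega
      · intro hj
        have h1 : j < m := by omega
        refine ⟨h1, ?_⟩
        rw [Nat.mod_eq_of_lt (by omega)]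
        omega
    rw [he, Finset.card_range]
    omega

private lemma lemB (m : ℕ) [NeZero (2*m)] (hm : 0 < m) (g h : ZMod (2*m)) :
    (∑ k : ZMod (2*m), (if (g - k).val < m then (1:ℂ) else 0) *
      (if (h - k).val < m then (0:ℂ) else 1)) =
    ((min ((h - g).val) (2 * m - (h - g).val) : ℕ) : ℂ) := by
  set t := (h - g).val with htdef
  have ht : t < 2*m := ZMod.val_lt _
  have step1 : ∀ k : ZMod (2*m),
      (if (g - k).val < m then (1:ℂ) else 0) * (if (h - k).val < m then (0:ℂ) else 1)
      = if ((g - k).val < m ∧ m ≤ (h - k).val) then (1:ℂ) else 0 := by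
    intro k
    rcases lt_or_ge (h - k).val m with h2 | h2
    · have hn : ¬ ((g - k).val < m ∧ m ≤ (h - k).val) := fun hc => absurd hc.2 (not_le.mpr h2)
      rw [if_pos h2, if_neg hn, mul_zero]
    · rw [if_neg (not_lt.mpr h2)]
      by_cases h1 : (g - k).val < m
      · rw [if_pos h1, if_pos ⟨h1, h2⟩, one_mul]
      · rw [if_neg h1, if_neg (fun hc => h1 hc.1), zero_mul]
  rw [Finset.sum_congr rfl (fun k _ => step1 k), Finset.sum_boole]
  have hval : ∀ k : ZMod (2*m), (h - k).val = (t + (g - k).val) % (2*m) := by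
    intro k
    have : h - k = (h - g) + (g - k) := by ring
    rw [this, ZMod.val_add]
  have hcard :
      (Finset.univ.filter (fun k : ZMod (2*m) => (g - k).val < m ∧ m ≤ (h - k).val)).card
      = ((Finset.range m).filter (fun j => m ≤ (t + j) % (2*m))).card := by
    apply Finset.card_bij' (fun k _ => (g - k).val) (fun j _ => g - (j : ZMod (2*m)))
    · intro k hk
      simp only [Finset.mem_filter, Finset.mem_univ, true_and] at hk
      simp only [Finset.mem_filter, Finset.mem_range]
      exact ⟨hk.1, by rw [← hval k]; exact hk.2⟩
    · intro j hj
      simp only [Finset.mem_filter, Finset.mem_range] at hj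
      simp only [Finset.mem_filter, Finset.mem_univ, true_and]
      have hjlt : j < 2*m := lt_of_lt_of_le hj.1 (by omega)
      have h1 : g - (g - (j : ZMod (2*m))) = (j : ZMod (2*m)) := by ring
      have h2 : (g - (g - (j : ZMod (2*m)))).val = j := by
        rw [h1, ZMod.val_natCast_of_lt hjlt]
      refine ⟨by rw [h2]; exact hj.1, ?_⟩
      rw [hval, h2]
      exact hj.2
    · intro k hk
      have : ((( (g - k).val : ℕ) : ZMod (2*m))) = g - k := ZMod.natCast_rightInverse _
      rw [this]; ring
    · intro j hj
      simp only [Finset.mem_filter, Finset.mem_range] at hj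
      have hjlt : j < 2*m := lt_of_lt_of_le hj.1 (by omega)
      have h1 : g - (g - (j : ZMod (2*m))) = (j : ZMod (2*m)) := by ring
      rw [h1, ZMod.val_natCast_of_lt hjlt]
  rw [hcard, countA m t hm ht]

/-- the word length |g| = min{g, 2m−g} on ℤ_{2m} is conditionally
negative. -/
theorem word_length_Z2m_condNeg (m : ℕ) (hm : 0 < m) :
    ∀ a : ZMod (2 * m) →₀ ℂ, (∑ g ∈ a.support, a g) = 0 →
      (∑ g ∈ a.support, ∑ h ∈ a.support, (starRingEnd ℂ) (a g) * a h *
        ((min ((h - g).val) (2 * m - (h - g).val) : ℕ) : ℂ)) ≤ 0 := by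
  intro a ha
  haveI : NeZero (2*m) := ⟨by omega⟩
  set B : ZMod (2*m) → ℂ := fun k => ∑ x ∈ a.support, a x * (if (x - k).val < m then 1 else 0)
    with hB
  have key : ∀ g h : ZMod (2*m), (starRingEnd ℂ) (a g) * a h *
        ((min ((h - g).val) (2 * m - (h - g).val) : ℕ) : ℂ)
      = ∑ k : ZMod (2*m), ((starRingEnd ℂ) (a g) * (if (g - k).val < m then 1 else 0)) *
          (a h * (if (h - k).val < m then (0:ℂ) else 1)) := by
    intro g h
    rw [← lemB m hm g h, Finset.mul_sum]
    exact Finset.sum_congr rfl (fun k _ => by ring)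
  calc (∑ g ∈ a.support, ∑ h ∈ a.support, (starRingEnd ℂ) (a g) * a h *
        ((min ((h - g).val) (2 * m - (h - g).val) : ℕ) : ℂ))
      = ∑ g ∈ a.support, ∑ h ∈ a.support, ∑ k : ZMod (2*m),
          ((starRingEnd ℂ) (a g) * (if (g - k).val < m then 1 else 0)) *
          (a h * (if (h - k).val < m then (0:ℂ) else 1)) := by
        exact Finset.sum_congr rfl (fun g _ => Finset.sum_congr rfl (fun h _ => key g h))
    _ = ∑ k : ZMod (2*m), ∑ g ∈ a.support, ∑ h ∈ a.support,
          ((starRingEnd ℂ) (a g) * (if (g - k).val < m then 1 else 0)) *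
          (a h * (if (h - k).val < m then (0:ℂ) else 1)) := by
        rw [Finset.sum_congr rfl (fun g _ => Finset.sum_comm), Finset.sum_comm]
    _ = ∑ k : ZMod (2*m),
          (∑ g ∈ a.support, (starRingEnd ℂ) (a g) * (if (g - k).val < m then 1 else 0)) *
          (∑ h ∈ a.support, a h * (if (h - k).val < m then (0:ℂ) else 1)) := by
        exact Finset.sum_congr rfl (fun k _ => (Finset.sum_mul_sum _ _ _ _).symm)
    _ = ∑ k : ZMod (2*m), (starRingEnd ℂ) (B k) * (- B k) := by
        refine Finset.sum_congr rfl (fun k _ => ?_)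
        congr 1
        · rw [hB, map_sum]
          refine Finset.sum_congr rfl (fun x _ => ?_)
          rw [map_mul]
          congr 1
          split <;> simp
        · have hpt : ∀ x : ZMod (2*m), a x * (if (x - k).val < m then (0:ℂ) else 1)
              = a x - a x * (if (x - k).val < m then (1:ℂ) else 0) := by
            intro x; split <;> ring
          rw [Finset.sum_congr rfl (fun x _ => hpt x), Finset.sum_sub_distrib, ha, zero_sub]
    _ ≤ 0 := by
        have : ∀ k : ZMod (2*m), (starRingEnd ℂ) (B k) * (- B k)
            = -((starRingEnd ℂ) (B k) * B k) := fun k => by ring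
        rw [Finset.sum_congr rfl (fun k _ => this k)]
        rw [Finset.sum_neg_distrib]
        refine neg_nonpos.mpr (Finset.sum_nonneg (fun k _ => ?_))
        exact star_mul_self_nonneg (B k)
end

section
/- Let ψ(g) = ∑_{j=1}^n |g_j| on ℤ_{2m}^n, where |g_j| = min{g_j, 2m−g_j}. For 1 ≤ ℓ ≤ ℓ' ≤ 2m and j ∈ [n], the Gromov form satisfies ⟨δ_{ℓ e_j}, δ_{ℓ' e_j}⟩_ψ = min{ℓ, 2m−ℓ', max{0, m−ℓ'+ℓ}}. -/
/-- The word length ψ on ℤ_{2m}ⁿ. -/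
def psiZ2m (m n : ℕ) (g : Fin n → ZMod (2 * m)) : ℕ :=
  ∑ j, min ((g j).val) (2 * m - (g j).val)

lemma psiZ2m_single (m n : ℕ) (hm : 0 < m) (j : Fin n) (x : ZMod (2 * m)) :
    psiZ2m m n (Pi.single j x) = min x.val (2 * m - x.val) := by
  haveI : NeZero (2 * m) := ⟨by omega⟩
  unfold psiZ2m
  rw [Finset.sum_eq_single j]
  · simp
  · intro i _ hij
    simp [Pi.single_eq_of_ne hij]
  · simp

lemma cast_min_val (m a : ℕ) (ha : a ≤ 2 * m) :
    ((min (a % (2 * m)) (2 * m - a % (2 * m)) : ℕ) : ℝ)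
      = min (a : ℝ) (2 * (m : ℝ) - a) := by
  rcases eq_or_lt_of_le ha with h | h
  · subst h
    simp [Nat.mod_self]
  · rw [Nat.mod_eq_of_lt h]
    push_cast [Nat.cast_sub h.le]
    ring_nf

set_option maxHeartbeats 1000000 in
/-- for 1 ≤ ℓ ≤ ℓ' ≤ 2m, the Gromov form satisfies
⟨δ_{ℓe_j}, δ_{ℓ'e_j}⟩_ψ = min{ℓ, 2m−ℓ', max{0, m−ℓ'+ℓ}}. -/
theorem gromov_form_Z2mn_diag (m n : ℕ) (hm : 0 < m) (j : Fin n) (ℓ ℓ' : ℕ)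
    (h1 : 1 ≤ ℓ) (h2 : ℓ ≤ ℓ') (h3 : ℓ' ≤ 2 * m) :
    ((psiZ2m m n (Pi.single j (ℓ : ZMod (2 * m))) : ℝ)
        + (psiZ2m m n (Pi.single j (ℓ' : ZMod (2 * m))) : ℝ)
        - (psiZ2m m n (Pi.single j ((ℓ' : ZMod (2 * m)) - (ℓ : ZMod (2 * m)))) : ℝ)) / 2
      = min (ℓ : ℝ) (min ((2 * m : ℝ) - ℓ') (max 0 ((m : ℝ) - ℓ' + ℓ))) := by
  haveI : NeZero (2 * m) := ⟨by omega⟩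
  have hd : ((ℓ' : ZMod (2 * m)) - (ℓ : ZMod (2 * m))) = ((ℓ' - ℓ : ℕ) : ZMod (2 * m)) := by
    rw [Nat.cast_sub h2]
  rw [psiZ2m_single m n hm, psiZ2m_single m n hm, psiZ2m_single m n hm, hd,
    ZMod.val_natCast, ZMod.val_natCast, ZMod.val_natCast,
    cast_min_val m ℓ (le_trans h2 h3), cast_min_val m ℓ' h3,
    cast_min_val m (ℓ' - ℓ) (by omega)]
  have hsub : ((ℓ' - ℓ : ℕ) : ℝ) = (ℓ' : ℝ) - ℓ := by
    push_cast [Nat.cast_sub h2]; ring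
  rw [hsub]
  have hL1 : (1 : ℝ) ≤ ℓ := by exact_mod_cast h1
  have hL2 : (ℓ : ℝ) ≤ ℓ' := by exact_mod_cast h2
  have hL3 : (ℓ' : ℝ) ≤ 2 * m := by exact_mod_cast h3
  simp only [min_def, max_def]
  split_ifs <;> linarith
end
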